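/- Fix α ∈ (0,1), σ_Z ≥ 0 and k > 0 (k represents the fixed ratio τ_Q/σ_β). For β ∈ (0,1) write σ_β = √(β² + (1−β)²) and c(β) = αβ + (1−α)(1−β), and let σ_α = √(α² + (1−α)² + σ_Z²). Then the mean admitted type T(β) = (α/σ_α)·H(k σ_β σ_α / c(β)) and the mean admitted soft skill S(β) = ((1−α)/σ_α)·H(k σ_β σ_α / c(β)) are both strictly decreasing for β ∈ (0,α) and strictly increasing for β ∈ (α,1); in particular both attain their minimum over (0,1) at β = α. -/

import Mathlib

open MeasureTheory Real Set Filter Topology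
open scoped ENNReal

/-- Standard normal pdf. -/
noncomputable def phi (x : ℝ) : ℝ := Real.exp (-x ^ 2 / 2) / Real.sqrt (2 * Real.pi)

/-- Standard normal cdf. -/
noncomputable def Phi (x : ℝ) : ℝ := ∫ y in Set.Iic x, phi y

/-- Standard normal hazard rate. -/
noncomputable def Haz (x : ℝ) : ℝ := phi x / (1 - Phi x)


lemma phi_eq (x : ℝ) : phi x = Real.exp (-(1/2) * x ^ 2) / Real.sqrt (2 * Real.pi) := by
  simp [phi]; ring_nf

lemma phi_pos (x : ℝ) : 0 < phi x :=
  div_pos (Real.exp_pos _) (Real.sqrt_pos.2 (by positivity))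

lemma integrable_phi : Integrable phi := by
  have := (integrable_exp_neg_mul_sq (b := 1/2) (by norm_num)).div_const (Real.sqrt (2 * Real.pi))
  exact this.congr (by
    filter_upwards with x
    rw [phi_eq])

lemma integral_phi : ∫ x, phi x = 1 := by
  have h := integral_gaussian (1/2)
  have : ∫ x, phi x = (∫ x, Real.exp (-(1/2) * x ^ 2)) / Real.sqrt (2 * Real.pi) := by
    rw [← integral_div]
    exact integral_congr_ae (by filter_upwards with x; rw [phi_eq])
  rw [this, h]
  rw [show (π / (1/2)) = 2 * π by ring]
  rw [div_self (by positivity)]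

lemma hasDerivAt_phi (x : ℝ) : HasDerivAt phi (-x * phi x) x := by
  have h1 : HasDerivAt (fun x : ℝ => -x ^ 2 / 2) (-x) x := by
    have := ((hasDerivAt_pow 2 x).neg).div_const 2
    simpa using this.congr_deriv (by ring)
  have h2 := (h1.exp).div_const (Real.sqrt (2 * Real.pi))
  exact h2.congr_deriv (by simp [phi]; ring)



lemma continuous_phi : Continuous phi := by
  unfold phi; continuity

lemma one_sub_Phi (x : ℝ) : 1 - Phi x = ∫ y in Set.Ioi x, phi y := by
  have := intervalIntegral.integral_Iic_add_Ioi (μ := volume) (b := x) integrable_phi.integrableOn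
    integrable_phi.integrableOn
  rw [integral_phi] at this
  rw [Phi]; linarith

lemma one_sub_Phi_pos (x : ℝ) : 0 < 1 - Phi x := by
  rw [one_sub_Phi]
  rw [setIntegral_pos_iff_support_of_nonneg_ae
    (Filter.Eventually.of_forall fun y => (phi_pos y).le) integrable_phi.integrableOn]
  have : Function.support phi ∩ Set.Ioi x = Set.Ioi x := by
    ext y; simp [Function.support, (phi_pos y).ne']
  rw [this]
  simp

lemma hasDerivAt_Phi (x : ℝ) : HasDerivAt Phi (phi x) x := by
  have key : ∀ y : ℝ, Phi y = Phi 0 + ∫ t in (0:ℝ)..y, phi t := by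
    intro y
    have := intervalIntegral.integral_Iic_sub_Iic (μ := volume) (f := phi)
      integrable_phi.integrableOn integrable_phi.integrableOn (a := 0) (b := y)
    rw [Phi, Phi]; linarith [this]
  have h : HasDerivAt (fun y => Phi 0 + ∫ t in (0:ℝ)..y, phi t) (phi x) x := by
    have := (intervalIntegral.integral_hasDerivAt_right
      (integrable_phi.intervalIntegrable (a := 0) (b := x))
      (continuous_phi.stronglyMeasurableAtFilter _ _)
      continuous_phi.continuousAt).const_add (Phi 0)
    exact this
  have e : Phi = fun y => Phi 0 + ∫ t in (0:ℝ)..y, phi t := funext key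
  rw [e]; exact h



lemma integrable_id_mul_phi : Integrable (fun t => t * phi t) := by
  have h := integrable_mul_exp_neg_mul_sq (b := 1/2) (by norm_num)
  have := h.div_const (Real.sqrt (2 * Real.pi))
  exact this.congr (by
    filter_upwards with x
    unfold phi
    rw [mul_div_assoc]
    ring_nf)

lemma tendsto_phi_atTop : Tendsto phi atTop (𝓝 0) := by
  have h1 : Tendsto (fun x : ℝ => -x ^ 2 / 2) atTop atBot := by
    apply Tendsto.atBot_div_const (by norm_num)
    exact tendsto_neg_atTop_atBot.comp (tendsto_pow_atTop (by norm_num))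
  have h2 := Real.tendsto_exp_atBot.comp h1
  have h3 := h2.div_const (Real.sqrt (2 * Real.pi))
  have e : phi = fun x => Real.exp (-x ^ 2 / 2) / Real.sqrt (2 * Real.pi) := rfl
  rw [e]
  simpa [Function.comp] using h3

lemma integral_id_mul_phi (x : ℝ) : ∫ t in Set.Ioi x, t * phi t = phi x := by
  have h := integral_Ioi_of_hasDerivAt_of_tendsto (a := x) (f := fun t => -phi t)
    (f' := fun t => t * phi t) (m := 0)
    (continuous_phi.neg.continuousWithinAt)
    (fun t _ => by have := (hasDerivAt_phi t).neg.congr_deriv (show -(-t * phi t) = t * phi t by ring); exact this)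
    integrable_id_mul_phi.integrableOn
    (by simpa using tendsto_phi_atTop.neg)
  simpa using h

lemma mills (x : ℝ) : x * (1 - Phi x) < phi x := by
  have key : phi x - x * (1 - Phi x) = ∫ t in Set.Ioi x, (t - x) * phi t := by
    have : ∀ t : ℝ, (t - x) * phi t = t * phi t - x * phi t := fun t => by ring
    rw [integral_congr_ae (Filter.Eventually.of_forall fun t => this t) ]
    rw [integral_sub integrable_id_mul_phi.integrableOn
      (integrable_phi.integrableOn.const_mul x)]
    rw [integral_id_mul_phi, integral_const_mul, ← one_sub_Phi]
  have pos : 0 < ∫ t in Set.Ioi x, (t - x) * phi t := by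
    rw [setIntegral_pos_iff_support_of_nonneg_ae]
    · have : Set.Ioi x ⊆ Function.support (fun t => (t - x) * phi t) ∪ {x} := by
        intro t ht
        rcases eq_or_ne t x with rfl | h
        · exact Or.inr rfl
        · exact Or.inl (by
            simp only [Function.mem_support]
            exact mul_ne_zero (sub_ne_zero.2 h) (phi_pos t).ne')
      have hsub : Set.Ioi x \ {x} ⊆ Function.support (fun t => (t - x) * phi t) := by
        intro t ht
        simp only [Function.mem_support]
        exact mul_ne_zero (sub_ne_zero.2 (ne_of_gt ht.1)) (phi_pos t).ne'
      calc (0:ℝ≥0∞) < volume (Set.Ioi x \ {x}) := by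
            rw [measure_diff_null (measure_singleton x)]; simp
        _ ≤ volume (Function.support (fun t => (t - x) * phi t) ∩ Set.Ioi x) := by
            apply measure_mono
            intro t ht
            exact ⟨hsub ht, ht.1⟩
    · filter_upwards [ae_restrict_mem measurableSet_Ioi] with t ht
      exact mul_nonneg (by linarith [ht.out]) (phi_pos t).le
    · exact (integrable_id_mul_phi.integrableOn.sub
        (integrable_phi.integrableOn.const_mul x)).congr
        (Filter.Eventually.of_forall fun t => by simp only [Pi.sub_apply]; ring)
  rw [← key] at pos; linarith

lemma hasDerivAt_Haz (x : ℝ) :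
    HasDerivAt Haz (phi x * (phi x - x * (1 - Phi x)) / (1 - Phi x) ^ 2) x := by
  have h := (hasDerivAt_phi x).div ((hasDerivAt_const x (1:ℝ)).sub (hasDerivAt_Phi x))
    (one_sub_Phi_pos x).ne'
  exact h.congr_deriv (by simp only [Pi.sub_apply]; ring)

lemma strictMonoOn_Haz : StrictMonoOn Haz (Set.Ici 0) := by
  apply strictMonoOn_of_deriv_pos (convex_Ici 0)
  · exact fun x _ => ((hasDerivAt_Haz x).differentiableAt.continuousAt).continuousWithinAt
  · intro x hx
    rw [interior_Ici] at hx
    rw [(hasDerivAt_Haz x).deriv]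
    have h1 := mills x
    have h2 := phi_pos x
    have h3 := one_sub_Phi_pos x
    have h4 : 0 < phi x - x * (1 - Phi x) := by linarith
    positivity


theorem stmt10 (α σZ k : ℝ) (hα : α ∈ Set.Ioo (0 : ℝ) 1) (hσZ : 0 ≤ σZ) (hk : 0 < k)
    (σα : ℝ) (hσα : σα = Real.sqrt (α ^ 2 + (1 - α) ^ 2 + σZ ^ 2))
    (σβ c T S : ℝ → ℝ)
    (hσβ : ∀ β, σβ β = Real.sqrt (β ^ 2 + (1 - β) ^ 2))
    (hc : ∀ β, c β = α * β + (1 - α) * (1 - β))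
    (hT : ∀ β, T β = α / σα * Haz (k * σβ β * σα / c β))
    (hS : ∀ β, S β = (1 - α) / σα * Haz (k * σβ β * σα / c β)) :
    StrictAntiOn T (Set.Ioo 0 α) ∧ StrictMonoOn T (Set.Ioo α 1) ∧
    StrictAntiOn S (Set.Ioo 0 α) ∧ StrictMonoOn S (Set.Ioo α 1) ∧
    (∀ β ∈ Set.Ioo (0 : ℝ) 1, β ≠ α → T α < T β ∧ S α < S β) := by
  obtain ⟨hα0, hα1⟩ := hα
  have hσα_pos : 0 < σα := by
    rw [hσα]; exact Real.sqrt_pos.2 (by nlinarith)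
  have hc_pos : ∀ b, 0 < b → b < 1 → 0 < c b := by
    intro b h0 h1; rw [hc]; nlinarith
  have hN_pos : ∀ b : ℝ, 0 < b ^ 2 + (1 - b) ^ 2 := by
    intro b; nlinarith [sq_nonneg (2 * b - 1)]
  have hσβ_pos : ∀ b, 0 < σβ b := by
    intro b; rw [hσβ]; exact Real.sqrt_pos.2 (hN_pos b)
  -- comparison of ratios from comparison of squares
  have hratio : ∀ b₁ b₂, 0 < b₁ → b₁ < 1 → 0 < b₂ → b₂ < 1 →
      (b₁ ^ 2 + (1 - b₁) ^ 2) * (c b₂) ^ 2 < (b₂ ^ 2 + (1 - b₂) ^ 2) * (c b₁) ^ 2 →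
      σβ b₁ / c b₁ < σβ b₂ / c b₂ := by
    intro b₁ b₂ h₁0 h₁1 h₂0 h₂1 hsq
    have hc₁ := hc_pos b₁ h₁0 h₁1
    have hc₂ := hc_pos b₂ h₂0 h₂1
    rw [div_lt_div_iff₀ hc₁ hc₂, hσβ, hσβ]
    have e₁ : Real.sqrt (b₁ ^ 2 + (1 - b₁) ^ 2) * c b₂
        = Real.sqrt ((b₁ ^ 2 + (1 - b₁) ^ 2) * (c b₂) ^ 2) := by
      rw [Real.sqrt_mul (hN_pos b₁).le, Real.sqrt_sq hc₂.le]
    have e₂ : Real.sqrt (b₂ ^ 2 + (1 - b₂) ^ 2) * c b₁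
        = Real.sqrt ((b₂ ^ 2 + (1 - b₂) ^ 2) * (c b₁) ^ 2) := by
      rw [Real.sqrt_mul (hN_pos b₂).le, Real.sqrt_sq hc₁.le]
    rw [e₁, e₂]
    exact Real.sqrt_lt_sqrt (by positivity) hsq
  -- from ratio inequality to T and S inequalities
  have main : ∀ b₁ b₂, 0 < b₁ → b₁ < 1 → 0 < b₂ → b₂ < 1 →
      σβ b₁ / c b₁ < σβ b₂ / c b₂ → T b₁ < T b₂ ∧ S b₁ < S b₂ := by
    intro b₁ b₂ h₁0 h₁1 h₂0 h₂1 hr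
    have hc₁ := hc_pos b₁ h₁0 h₁1
    have hc₂ := hc_pos b₂ h₂0 h₂1
    have harg : k * σβ b₁ * σα / c b₁ < k * σβ b₂ * σα / c b₂ := by
      have e : ∀ b, c b ≠ 0 → k * σβ b * σα / c b = k * σα * (σβ b / c b) := by
        intro b hb; field_simp
      rw [e b₁ hc₁.ne', e b₂ hc₂.ne']
      exact mul_lt_mul_of_pos_left hr (by positivity)
    have hmem₁ : k * σβ b₁ * σα / c b₁ ∈ Set.Ici (0:ℝ) := by
      have := hσβ_pos b₁
      exact Set.mem_Ici.2 (le_of_lt (by positivity))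
    have hmem₂ : k * σβ b₂ * σα / c b₂ ∈ Set.Ici (0:ℝ) := by
      have := hσβ_pos b₂
      exact Set.mem_Ici.2 (le_of_lt (by positivity))
    have hH := strictMonoOn_Haz hmem₁ hmem₂ harg
    constructor
    · rw [hT, hT]; exact mul_lt_mul_of_pos_left hH (by positivity)
    · rw [hS, hS]
      exact mul_lt_mul_of_pos_left hH (div_pos (by linarith) hσα_pos)
  have key_id : ∀ b₁ b₂ : ℝ,
      (b₁ ^ 2 + (1 - b₁) ^ 2) * (c b₂) ^ 2 - (b₂ ^ 2 + (1 - b₂) ^ 2) * (c b₁) ^ 2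
      = (b₂ - b₁) * ((α - b₁) * c b₂ + (α - b₂) * c b₁) := by
    intro b₁ b₂; rw [hc, hc]; ring
  have anti : ∀ a ∈ Set.Ioo (0:ℝ) α, ∀ b ∈ Set.Ioo (0:ℝ) α, a < b →
      T b < T a ∧ S b < S a := by
    intro a ha b hb hab
    have hb1 : b < 1 := lt_trans hb.2 hα1
    have ha1 : a < 1 := lt_trans ha.2 hα1
    apply main b a hb.1 hb1 ha.1 ha1
    apply hratio b a hb.1 hb1 ha.1 ha1
    have hid := key_id b a
    have hca := hc_pos a ha.1 ha1
    have hcb := hc_pos b hb.1 hb1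
    nlinarith [mul_pos (sub_pos.2 hab) (add_pos (mul_pos (sub_pos.2 hb.2) hca)
      (mul_pos (sub_pos.2 ha.2) hcb))]
  have mono : ∀ a ∈ Set.Ioo α (1:ℝ), ∀ b ∈ Set.Ioo α (1:ℝ), a < b →
      T a < T b ∧ S a < S b := by
    intro a ha b hb hab
    have ha0 : 0 < a := lt_trans hα0 ha.1
    have hb0 : 0 < b := lt_trans hα0 hb.1
    apply main a b ha0 ha.2 hb0 hb.2
    apply hratio a b ha0 ha.2 hb0 hb.2
    have hid := key_id a b
    have hca := hc_pos a ha0 ha.2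
    have hcb := hc_pos b hb0 hb.2
    nlinarith [mul_pos (sub_pos.2 hab) (add_pos (mul_pos (sub_pos.2 ha.1) hcb)
      (mul_pos (sub_pos.2 hb.1) hca))]
  have minlem : ∀ β ∈ Set.Ioo (0:ℝ) 1, β ≠ α → T α < T β ∧ S α < S β := by
    intro β hβ hne
    apply main α β hα0 hα1 hβ.1 hβ.2
    apply hratio α β hα0 hα1 hβ.1 hβ.2
    have hid := key_id α β
    have hcα := hc_pos α hα0 hα1
    have hβα : (β - α) ^ 2 > 0 := by have := sub_ne_zero.2 hne; positivity
    nlinarith [mul_pos hβα hcα]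
  exact ⟨fun a ha b hb hab => (anti a ha b hb hab).1,
    fun a ha b hb hab => (mono a ha b hb hab).1,
    fun a ha b hb hab => (anti a ha b hb hab).2,
    fun a ha b hb hab => (mono a ha b hb hab).2,
    minlem⟩
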